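/- Let G be an infinite discrete group and let π : X → Y be a continuous surjective G-equivariant map between minimal G-flows X and Y, where Y is essentially free. If Y has the separated covering property, then X has the separated covering property. -/

import Mathlib

open Pointwise

section Defs

variable (G : Type*) [Group G]

/-- The right-shift of `G` on `G → A`: `(g • z) h = z (h * g)`. -/
instance (priority := high) shiftSMul (A : Type*) : SMul G (G → A) :=
  ⟨fun g z h => z (h * g)⟩

/-- The right-shift action of `G` on `G → A` is a `G`-action (the Bernoulli flow when
`A = Bool`). -/
instance shiftMulAction (A : Type*) : MulAction G (G → A) where
  one_smul z := funext fun h => by show z (h * 1) = z h; rw [mul_one]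
  mul_smul g₁ g₂ z := funext fun h => by
    show z (h * (g₁ * g₂)) = z (h * g₁ * g₂)
    rw [mul_assoc]

/-- `S ⊆ G` is `D`-separated if `Dg ∩ Dh = ∅` for all distinct `g, h ∈ S`. -/
def DSeparated (D S : Set G) : Prop :=
  ∀ g ∈ S, ∀ h ∈ S, g ≠ h → Disjoint (D * ({g} : Set G)) (D * ({h} : Set G))

/-- The separated covering property for a `G`-flow `X`: for every finite `D ⊆ G`
and every nonempty open `U ⊆ X` there is a `D`-separated `S ⊆ G` with `S⁻¹U = X`. -/
def SCP (X : Type*) [TopologicalSpace X] [MulAction G X] : Prop :=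
  ∀ D : Set G, D.Finite → ∀ U : Set X, IsOpen U → U.Nonempty →
    ∃ S : Set G, DSeparated G D S ∧ ∀ x : X, ∃ s ∈ S, s • x ∈ U

/-- A `G`-flow is minimal if every orbit is dense. -/
def IsMinimalFlow (X : Type*) [TopologicalSpace X] [MulAction G X] : Prop :=
  ∀ x : X, Dense (MulAction.orbit G x)

/-- Two `G`-flows `X` and `Y` are disjoint if the only closed `G`-invariant subset of
`X × Y` projecting onto both factors is `X × Y` itself. -/
def FlowsDisjoint (X Y : Type*) [TopologicalSpace X] [TopologicalSpace Y]
    [MulAction G X] [MulAction G Y] : Prop :=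
  ∀ J : Set (X × Y), IsClosed J → (∀ (g : G), ∀ p ∈ J, g • p ∈ J) →
    Prod.fst '' J = Set.univ → Prod.snd '' J = Set.univ → J = Set.univ

end Defs

/-- A `G`-flow is essentially free if for every `g ≠ 1` the set of `g`-fixed points has
empty interior. -/
def EssentiallyFree (G : Type*) [Group G] (Y : Type*) [TopologicalSpace Y]
    [MulAction G Y] : Prop :=
  ∀ g : G, g ≠ 1 → interior {y : Y | g • y = y} = ∅

/-- Let `π : X → Y` be a continuous surjective `G`-equivariant map between
minimal `G`-flows with `Y` essentially free.  If `Y` has the separated covering property,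
then so does `X`. -/
theorem SCP_lifts_along_extensions
    (G : Type*) [Group G] [Infinite G]
    (X : Type*) [TopologicalSpace X] [CompactSpace X] [T2Space X] [Nonempty X]
    [MulAction G X] [ContinuousConstSMul G X]
    (Y : Type*) [TopologicalSpace Y] [CompactSpace Y] [T2Space Y] [Nonempty Y]
    [MulAction G Y] [ContinuousConstSMul G Y]
    (π : X → Y) (hπcont : Continuous π) (hπsurj : Function.Surjective π)
    (hπequiv : ∀ (g : G) (x : X), π (g • x) = g • π x)
    (hXmin : IsMinimalFlow G X) (hYmin : IsMinimalFlow G Y)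
    (hYef : EssentiallyFree G Y) (hYscp : SCP G Y) :
    SCP G X := by
  classical
  intro D hD U hUopen hUne
  -- A finite covering lemma from minimality + compactness
  have hcov : ∀ U' : Set X, IsOpen U' → U'.Nonempty →
      ∃ t : Finset G, ∀ x : X, ∃ g ∈ t, g • x ∈ U' := by
    intro U' hO hne
    have h1 : (Set.univ : Set X) ⊆ ⋃ g : G, (fun x : X => g • x) ⁻¹' U' := by
      intro x _
      obtain ⟨z, hz, hzU⟩ := (hXmin x).exists_mem_open hO hne
      obtain ⟨g, rfl⟩ := MulAction.mem_orbit_iff.mp hz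
      exact Set.mem_iUnion.mpr ⟨g, hzU⟩
    obtain ⟨t, ht⟩ := isCompact_univ.elim_finite_subcover _
      (fun g : G => hO.preimage (continuous_const_smul g)) h1
    refine ⟨t, fun x => ?_⟩
    simpa using ht (Set.mem_univ x)
  obtain ⟨F₁, hF₁⟩ := hcov U hUopen hUne
  set C := closure (π '' U) with hCdef
  have hCclosed : IsClosed C := isClosed_closure
  -- the closure of π '' U has nonempty interior (Baire)
  have hNne : (interior C).Nonempty := by
    have hclosed : ∀ g : ↥F₁, IsClosed ((fun y : Y => (g : G) • y) ⁻¹' C) :=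
      fun g => hCclosed.preimage (continuous_const_smul _)
    have hunion : ⋃ g : ↥F₁, ((fun y : Y => (g : G) • y) ⁻¹' C) = Set.univ := by
      apply Set.eq_univ_of_forall
      intro y
      obtain ⟨x, rfl⟩ := hπsurj y
      obtain ⟨g, hg, hgx⟩ := hF₁ x
      refine Set.mem_iUnion.mpr ⟨⟨g, hg⟩, ?_⟩
      show g • π x ∈ C
      exact subset_closure ⟨g • x, hgx, hπequiv g x⟩
    obtain ⟨g₀, y, hy⟩ := nonempty_interior_of_iUnion_of_closed hclosed hunion
    have hopenmap : IsOpenMap (fun y : Y => (g₀ : G) • y) := isOpenMap_smul _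
    have hsub : (fun y : Y => (g₀ : G) • y) ''
        (interior ((fun y : Y => (g₀ : G) • y) ⁻¹' C)) ⊆ interior C :=
      interior_maximal ((Set.image_mono interior_subset).trans (Set.image_preimage_subset _ _))
        (hopenmap _ isOpen_interior)
    exact ⟨_, hsub (Set.mem_image_of_mem _ hy)⟩
  set Q : Set G := (D⁻¹ * D) \ {1} with hQdef
  have hQfin : Q.Finite := (hD.inv.mul hD).diff
  -- a point y₀ in the interior of C which is moved by every element of Q
  have hfree : Dense (⋂ c ∈ Q, {y : Y | c • y = y}ᶜ) := by
    refine dense_biInter_of_isOpen (fun c _ => ?_) hQfin.countable (fun c hc => ?_)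
    · exact (isClosed_eq (continuous_const_smul c) continuous_id).isOpen_compl
    · exact interior_eq_empty_iff_dense_compl.mp (hYef c (by
        simpa using (hQdef ▸ hc).2))
  obtain ⟨y₀, hy₀free, hy₀N⟩ := hfree.exists_mem_open isOpen_interior hNne
  have hy₀f : ∀ c ∈ Q, ¬ c • y₀ = y₀ := fun c hc => Set.mem_iInter₂.mp hy₀free c hc
  -- for each c ∈ Q, a neighborhood of y₀ whose closure is moved off itself by c
  have hW : ∀ c : G, ∃ Wc : Set Y, IsOpen Wc ∧ y₀ ∈ Wc ∧
      (c ∈ Q → ∀ a b, a ∈ closure Wc → b ∈ closure Wc → c • a ≠ b) := by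
    intro c
    by_cases hc : c ∈ Q
    · obtain ⟨u, v, hu, hv, hcu, hyv, huv⟩ := t2_separation (hy₀f c hc)
      obtain ⟨A, hA, hyA, hclA⟩ := normal_exists_closure_subset isClosed_singleton hv
        (Set.singleton_subset_iff.mpr hyv)
      obtain ⟨B, hB, hcB, hclB⟩ := normal_exists_closure_subset isClosed_singleton hu
        (Set.singleton_subset_iff.mpr hcu)
      refine ⟨A ∩ (fun y => c • y) ⁻¹' B,
        hA.inter (hB.preimage (continuous_const_smul c)),
        ⟨hyA rfl, hcB rfl⟩,
        fun _ a b ha hb hab => ?_⟩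
      have ha' : c • a ∈ closure B := by
        have hsub : closure (A ∩ (fun y => c • y) ⁻¹' B) ⊆ (fun y => c • y) ⁻¹' closure B :=
          closure_minimal (fun z hz => subset_closure hz.2)
            (isClosed_closure.preimage (continuous_const_smul c))
        exact hsub ha
      have hb' : b ∈ closure A := closure_mono Set.inter_subset_left hb
      exact Set.disjoint_left.mp huv (hclB (hab ▸ ha')) (hclA hb')
    · exact ⟨Set.univ, isOpen_univ, trivial, fun h => absurd h hc⟩
  choose Wfun hWopen hWmem hWsep using hW
  set W : Set Y := interior C ∩ ⋂ c ∈ Q, Wfun c with hWdef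
  have hWopen' : IsOpen W := isOpen_interior.inter (hQfin.isOpen_biInter fun c _ => hWopen c)
  have hy₀W : y₀ ∈ W := ⟨hy₀N, Set.mem_iInter₂.mpr fun c _ => hWmem c⟩
  have hWsub : ∀ c ∈ Q, W ⊆ Wfun c := fun c hc z hz => Set.mem_iInter₂.mp hz.2 c hc
  -- the shrunk open set U₀ ⊆ U lying above W
  set U₀ : Set X := U ∩ π ⁻¹' W with hU₀def
  have hU₀open : IsOpen U₀ := hUopen.inter (hWopen'.preimage hπcont)
  have hU₀ne : U₀.Nonempty := by
    have hy₀C : y₀ ∈ C := interior_subset hy₀N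
    obtain ⟨y₂, hy₂W, hy₂img⟩ := mem_closure_iff.mp hy₀C W hWopen' hy₀W
    obtain ⟨x₂, hx₂U, rfl⟩ := hy₂img
    exact ⟨x₂, hx₂U, hy₂W⟩
  obtain ⟨Fs, hFs⟩ := hcov U₀ hU₀open hU₀ne
  set FS : Set G := ↑Fs with hFSdef
  -- the key small open set V around y₀
  set V : Set Y := ⋂ f ∈ FS, ⋂ f' ∈ FS,
      (if (f' * f⁻¹ ∈ D⁻¹ * D ∧ f' * f⁻¹ ≠ 1) then
        (if f • y₀ ∈ closure W then (fun y => f' • y) ⁻¹' (closure W)ᶜ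
          else (fun y => f • y) ⁻¹' (closure W)ᶜ)
        else Set.univ) with hVdef
  have hVopen : IsOpen V := by
    refine Fs.finite_toSet.isOpen_biInter fun f _ =>
      Fs.finite_toSet.isOpen_biInter fun f' _ => ?_
    split_ifs
    · exact isClosed_closure.isOpen_compl.preimage (continuous_const_smul _)
    · exact isClosed_closure.isOpen_compl.preimage (continuous_const_smul _)
    · exact isOpen_univ
  have hy₀V : y₀ ∈ V := by
    refine Set.mem_iInter₂.mpr fun f _ => Set.mem_iInter₂.mpr fun f' _ => ?_
    split_ifs with h1 h2
    · -- show f' • y₀ ∉ closure W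
      intro hbad
      have hcQ : f' * f⁻¹ ∈ Q := ⟨h1.1, by simpa using h1.2⟩
      refine hWsep (f' * f⁻¹) hcQ (f • y₀) (f' • y₀)
        (closure_mono (hWsub _ hcQ) h2) (closure_mono (hWsub _ hcQ) hbad) ?_
      rw [smul_smul, inv_mul_cancel_right]
    · exact h2
    · trivial
  -- at most one of any colliding pair can "see" W from V
  have claim_sep : ∀ f ∈ FS, ∀ f' ∈ FS, f' * f⁻¹ ∈ D⁻¹ * D → f' * f⁻¹ ≠ 1 →
      ¬ ((∃ v ∈ V, f • v ∈ W) ∧ (∃ v ∈ V, f' • v ∈ W)) := by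
    rintro f hf f' hf' hmem hne1 ⟨⟨v, hvV, hvW⟩, ⟨v', hv'V, hv'W⟩⟩
    by_cases hy : f • y₀ ∈ closure W
    · have h := Set.mem_iInter₂.mp (Set.mem_iInter₂.mp hv'V f hf) f' hf'
      rw [if_pos ⟨hmem, hne1⟩, if_pos hy] at h
      exact h (subset_closure hv'W)
    · have h := Set.mem_iInter₂.mp (Set.mem_iInter₂.mp hvV f hf) f' hf'
      rw [if_pos ⟨hmem, hne1⟩, if_neg hy] at h
      exact h (subset_closure hvW)
  -- apply the SCP of Y
  obtain ⟨T, hTsep, hTcov⟩ := hYscp (D * FS) (hD.mul Fs.finite_toSet) V hVopen ⟨y₀, hy₀V⟩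
  set FV : Set G := {f : G | f ∈ FS ∧ ∃ v ∈ V, f • v ∈ W} with hFVdef
  refine ⟨FV * T, ?_, ?_⟩
  · -- D-separation
    intro s hs s' hs' hne
    obtain ⟨f, hf, t, ht, rfl⟩ := hs
    obtain ⟨f', hf', t', ht', rfl⟩ := hs'
    rw [Set.disjoint_left]
    rintro a ⟨d, hdD, w, hw, ha⟩ ⟨d', hd'D, w', hw', ha'⟩
    rw [Set.mem_singleton_iff] at hw hw'
    subst hw; subst hw'
    have hEq : d * (f * t) = d' * (f' * t') := ha.trans ha'.symm
    by_cases hteq : t = t'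
    · subst hteq
      have hdf : d * f = d' * f' := by
        have : (d * f) * t = (d' * f') * t := by
          rw [mul_assoc, mul_assoc]; exact hEq
        exact mul_right_cancel this
      by_cases hfeq : f = f'
      · exact hne (by rw [hfeq])
      · have h5 : d'⁻¹ * d = f' * f⁻¹ := by
          rw [inv_mul_eq_iff_eq_mul, ← mul_assoc, eq_mul_inv_iff_mul_eq]
          exact hdf
        have hmem : f' * f⁻¹ ∈ D⁻¹ * D :=
          ⟨d'⁻¹, Set.mem_inv.mpr (by simpa using hd'D), d, hdD, h5⟩
        have hne1 : f' * f⁻¹ ≠ 1 := fun h =>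
          hfeq (by rw [← inv_inv f, ← mul_inv_eq_one.mp h]; simp)
        exact claim_sep f hf.1 f' hf'.1 hmem hne1 ⟨hf.2, hf'.2⟩
    · have hdis := hTsep t ht t' ht' hteq
      have hm1 : d * (f * t) ∈ (D * FS) * {t} :=
        ⟨d * f, Set.mul_mem_mul hdD hf.1, t, rfl, mul_assoc d f t⟩
      have hm2 : d * (f * t) ∈ (D * FS) * {t'} := by
        rw [hEq]
        exact ⟨d' * f', Set.mul_mem_mul hd'D hf'.1, t', rfl, mul_assoc d' f' t'⟩
      exact Set.disjoint_left.mp hdis hm1 hm2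
  · -- covering
    intro x
    obtain ⟨t, htT, htV⟩ := hTcov (π x)
    obtain ⟨f, hfF, hfU⟩ := hFs (t • x)
    have hπeq : π (f • (t • x)) = f • (t • π x) := by rw [hπequiv, hπequiv]
    have hfW : f • (t • π x) ∈ W := by rw [← hπeq]; exact hfU.2
    refine ⟨f * t, Set.mul_mem_mul ⟨hfF, t • π x, htV, hfW⟩ htT, ?_⟩
    rw [mul_smul]
    exact hfU.1
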